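/- Let Λ be an integral lattice in a Euclidean space E whose minimum m is even, let x₀ ∈ Λ with N(x₀) = 2m − 2, let S₀ = {x ∈ Λ : N(x) = m and ⟨x₀, x⟩ = m − 1}, and let 𝓔(x₀, 2m+2) = {y ∈ Λ : N(y) = 2m+2 and y ≡ x₀ (mod 2)}. Then the map x ↦ x₀ − 2x is a bijection from S₀ onto 𝓔(x₀, 2m+2). -/
import Mathlib


open scoped InnerProductSpace

/-- Proposition 1.7, first part. With `Λ` integral of even minimum `m`,
`x₀ ∈ Λ` of norm `2m − 2`, `S₀ = {x ∈ S(Λ) | ⟨x₀, x⟩ = m − 1}` and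
`𝓔(x₀, 2m+2) = {y ∈ Λ | N(y) = 2m+2, y ≡ x₀ (mod 2)}`, the map `x ↦ x₀ − 2x` is a
bijection from `S₀` onto `𝓔(x₀, 2m+2)`. -/
theorem bijOn_S0_E
    {E : Type*} [NormedAddCommGroup E] [InnerProductSpace ℝ E] [FiniteDimensional ℝ E]
    (Λ : AddSubgroup E) (hdisc : DiscreteTopology Λ) (m : ℝ)
    (hmin : IsLeast {r : ℝ | ∃ x ∈ Λ, x ≠ 0 ∧ ⟪x, x⟫_ℝ = r} m)
    (hintegral : ∀ x ∈ Λ, ∀ y ∈ Λ, ∃ k : ℤ, ⟪x, y⟫_ℝ = (k : ℝ))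
    (hmeven : ∃ k : ℤ, m = 2 * (k : ℝ))
    (x₀ : E) (hx₀ : x₀ ∈ Λ) (hx₀N : ⟪x₀, x₀⟫_ℝ = 2 * m - 2)
    (S₀ : Set E) (hS₀ : S₀ = {x : E | x ∈ Λ ∧ ⟪x, x⟫_ℝ = m ∧ ⟪x₀, x⟫_ℝ = m - 1})
    (𝓔 : Set E)
    (h𝓔 : 𝓔 = {y : E | y ∈ Λ ∧ ⟪y, y⟫_ℝ = 2 * m + 2 ∧ ∃ z ∈ Λ, y - x₀ = (2 : ℝ) • z}) :
    Set.BijOn (fun x => x₀ - (2 : ℝ) • x) S₀ 𝓔 := by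
  subst hS₀ h𝓔
  have key : ∀ x : E, ⟪x₀ - (2:ℝ) • x, x₀ - (2:ℝ) • x⟫_ℝ
      = ⟪x₀, x₀⟫_ℝ - 4 * ⟪x₀, x⟫_ℝ + 4 * ⟪x, x⟫_ℝ := by
    intro x
    simp only [inner_sub_left, inner_sub_right, real_inner_smul_left, real_inner_smul_right,
      real_inner_comm x x₀]
    ring
  have hsmul2 : ∀ x : E, x ∈ Λ → (2:ℝ) • x ∈ Λ := by
    intro x hx
    rw [show ((2:ℝ) • x) = x + x by rw [two_smul]]
    exact Λ.add_mem hx hx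
  refine ⟨?_, ?_, ?_⟩
  · rintro x ⟨hxΛ, hxN, hxI⟩
    refine ⟨Λ.sub_mem hx₀ (hsmul2 x hxΛ), ?_, ⟨-x, Λ.neg_mem hxΛ, ?_⟩⟩
    · rw [key, hx₀N, hxN, hxI]; ring
    · simp only [smul_neg]
      abel
  · rintro x ⟨hxΛ, hxN, hxI⟩ y ⟨hyΛ, hyN, hyI⟩ h
    simp only at h
    have h2 : (2:ℝ) • x = (2:ℝ) • y := sub_right_injective h
    exact smul_right_injective E (by norm_num : (2:ℝ) ≠ 0) h2
  · rintro y ⟨hyΛ, hyN, z, hzΛ, hz⟩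
    have hyx : y = x₀ - (2:ℝ) • (-z) := by
      rw [smul_neg, sub_neg_eq_add, ← hz]; abel
    refine ⟨-z, ?_, hyx.symm⟩
    have hxΛ : -z ∈ Λ := Λ.neg_mem hzΛ
    set x := -z with hxdef
    have hexp : 2 * m + 2 = (2*m-2) - 4 * ⟪x₀, x⟫_ℝ + 4 * ⟪x, x⟫_ℝ := by
      rw [← hx₀N, ← key, ← hyx, hyN]
    have h1 : ⟪x, x⟫_ℝ - ⟪x₀, x⟫_ℝ = 1 := by linarith
    have hxne : x ≠ 0 := by
      intro h0
      rw [h0] at h1; simp at h1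
    have hxge : m ≤ ⟪x, x⟫_ℝ := hmin.2 ⟨x, hxΛ, hxne, rfl⟩
    have hne2 : x₀ - x ≠ 0 := by
      intro h0
      have hx0x : x₀ = x := by rwa [sub_eq_zero] at h0
      rw [← hx0x, hx₀N] at h1
      linarith
    have hNsub : ⟪x₀ - x, x₀ - x⟫_ℝ = 2*m - ⟪x, x⟫_ℝ := by
      simp only [inner_sub_left, inner_sub_right, hx₀N]
      linarith [real_inner_comm x x₀, h1]
    have hge2 : m ≤ ⟪x₀ - x, x₀ - x⟫_ℝ := hmin.2 ⟨x₀ - x, Λ.sub_mem hx₀ hxΛ, hne2, rfl⟩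
    rw [hNsub] at hge2
    have hxm : ⟪x, x⟫_ℝ = m := le_antisymm (by linarith) hxge
    exact ⟨hxΛ, hxm, by linarith⟩
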